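/- A 2-plane P in R^{2,2} is an α-plane (all self-dual 2-forms vanish on P) if and only if P is both J-invariant (holomorphic) and Lagrangian with respect to Ω, where J(X) = (-X^2,X^1,-X^4,X^3) and Ω(V,W) = G(V,JW). -/

import Mathlib

/- STATEMENT 8: a 2-plane P in ℝ^{2,2} is an α-plane (all self-dual 2-forms
vanish on P) iff P is J-invariant and Lagrangian for Ω(V,W) = G(V,JW),
where J(X) = (-X²,X¹,-X⁴,X³). -/

open Matrix
noncomputable section

def G (v w : Fin 4 → ℝ) : ℝ := v 0 * w 0 + v 1 * w 1 - v 2 * w 2 - v 3 * w 3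

def gInv : Fin 4 → ℝ := ![1, 1, -1, -1]

def eps (i j k l : Fin 4) : ℝ :=
  (((j:ℕ):ℝ) - ((i:ℕ):ℝ)) * ((((k:ℕ):ℝ) - ((i:ℕ):ℝ)) * ((((l:ℕ):ℝ) - ((i:ℕ):ℝ)) *
    ((((k:ℕ):ℝ) - ((j:ℕ):ℝ)) * ((((l:ℕ):ℝ) - ((j:ℕ):ℝ)) * (((l:ℕ):ℝ) - ((k:ℕ):ℝ)))))) / 12

/-- Hodge star on 2-forms (antisymmetric component matrices) of the neutral
metric, for the orientation used in the paper. -/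
def hodgeStar (M : Matrix (Fin 4) (Fin 4) ℝ) : Matrix (Fin 4) (Fin 4) ℝ :=
  fun i j => -(1/2) * ∑ k : Fin 4, ∑ l : Fin 4, eps i j k l * gInv k * gInv l * M k l

def ωval (M : Matrix (Fin 4) (Fin 4) ℝ) (v w : Fin 4 → ℝ) : ℝ :=
  ∑ i : Fin 4, ∑ j : Fin 4, M i j * v i * w j

def Jmap (v : Fin 4 → ℝ) : Fin 4 → ℝ := ![-v 1, v 0, -v 3, v 2]

/-! ### Auxiliary material -/

def SD1 : Matrix (Fin 4) (Fin 4) ℝ := !![0,1,0,0; -1,0,0,0; 0,0,0,-1; 0,0,1,0]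
def SD2 : Matrix (Fin 4) (Fin 4) ℝ := !![0,0,1,0; 0,0,0,-1; -1,0,0,0; 0,1,0,0]
def SD3 : Matrix (Fin 4) (Fin 4) ℝ := !![0,0,0,1; 0,0,1,0; 0,-1,0,0; -1,0,0,0]

lemma SD1_skew : SD1ᵀ = -SD1 := by
  funext i j; fin_cases i <;> fin_cases j <;> norm_num [SD1]
lemma SD2_skew : SD2ᵀ = -SD2 := by
  funext i j; fin_cases i <;> fin_cases j <;> norm_num [SD2]
lemma SD3_skew : SD3ᵀ = -SD3 := by
  funext i j; fin_cases i <;> fin_cases j <;> norm_num [SD3]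

lemma SD1_sd : hodgeStar SD1 = SD1 := by
  funext i j
  fin_cases i <;> fin_cases j <;>
    norm_num [hodgeStar, eps, gInv, SD1, Fin.sum_univ_four, Fin.isValue,
      show ((2:Fin 4):ℕ)=2 from rfl, show ((3:Fin 4):ℕ)=3 from rfl,
      Matrix.cons_val', Matrix.cons_val_zero, Matrix.cons_val_one, Matrix.head_cons,
      Matrix.empty_val', Matrix.cons_val_fin_one, Matrix.head_fin_const,
      Matrix.vecHead, Matrix.vecTail, Function.comp, Matrix.cons_val_two, Matrix.cons_val_three]
lemma SD2_sd : hodgeStar SD2 = SD2 := by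
  funext i j
  fin_cases i <;> fin_cases j <;>
    norm_num [hodgeStar, eps, gInv, SD2, Fin.sum_univ_four, Fin.isValue,
      show ((2:Fin 4):ℕ)=2 from rfl, show ((3:Fin 4):ℕ)=3 from rfl,
      Matrix.cons_val', Matrix.cons_val_zero, Matrix.cons_val_one, Matrix.head_cons,
      Matrix.empty_val', Matrix.cons_val_fin_one, Matrix.head_fin_const,
      Matrix.vecHead, Matrix.vecTail, Function.comp, Matrix.cons_val_two, Matrix.cons_val_three]
lemma SD3_sd : hodgeStar SD3 = SD3 := by
  funext i j
  fin_cases i <;> fin_cases j <;>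
    norm_num [hodgeStar, eps, gInv, SD3, Fin.sum_univ_four, Fin.isValue,
      show ((2:Fin 4):ℕ)=2 from rfl, show ((3:Fin 4):ℕ)=3 from rfl,
      Matrix.cons_val', Matrix.cons_val_zero, Matrix.cons_val_one, Matrix.head_cons,
      Matrix.empty_val', Matrix.cons_val_fin_one, Matrix.head_fin_const,
      Matrix.vecHead, Matrix.vecTail, Function.comp, Matrix.cons_val_two, Matrix.cons_val_three]

/-- 3×3 minor of the rows w,u,v with columns i,j,k. -/
def mnr (w u v : Fin 4 → ℝ) (i j k : Fin 4) : ℝ :=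
  w i * (u j * v k - u k * v j) - w j * (u i * v k - u k * v i)
    + w k * (u i * v j - u j * v i)

lemma span_of_minors (u v w : Fin 4 → ℝ) (i j : Fin 4)
    (hd : u i * v j - u j * v i ≠ 0)
    (hm : ∀ k, mnr w u v i j k = 0) :
    ∃ a b : ℝ, w = a • u + b • v := by
  refine ⟨(w i * v j - w j * v i) / (u i * v j - u j * v i),
          (u i * w j - u j * w i) / (u i * v j - u j * v i), funext fun k => ?_⟩
  have h := hm k
  simp only [mnr] at h
  simp only [Pi.add_apply, Pi.smul_apply, smul_eq_mul]
  rw [div_mul_eq_mul_div, div_mul_eq_mul_div, ← add_div, eq_div_iff hd]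
  linear_combination h

lemma exists_minor (u v : Fin 4 → ℝ)
    (h : ∀ s t : ℝ, s • u + t • v = 0 → s = 0 ∧ t = 0) :
    ∃ i j, u i * v j - u j * v i ≠ 0 := by
  by_contra hc
  push_neg at hc
  by_cases hu : u = 0
  · have h10 := h 1 0 (by simp [hu])
    exact one_ne_zero h10.1
  · obtain ⟨i, hi⟩ : ∃ i, u i ≠ 0 := by
      by_contra h0; push_neg at h0; exact hu (funext h0)
    have key : (v i) • u + (-(u i)) • v = 0 := by
      funext k
      have := hc i k
      simp only [Pi.add_apply, Pi.smul_apply, smul_eq_mul, Pi.zero_apply]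
      linear_combination -this
    exact hi (neg_eq_zero.mp (h (v i) (-(u i)) key).2)

lemma mnr_swap (w u v : Fin 4 → ℝ) (i j k : Fin 4) :
    mnr w u v i j k = - mnr w v u i j k := by
  simp only [mnr]; ring


lemma fmk0 (h : 0 < 4) : (⟨0, h⟩ : Fin 4) = 0 := rfl
lemma fmk1 (h : 1 < 4) : (⟨1, h⟩ : Fin 4) = 1 := rfl
lemma fmk2 (h : 2 < 4) : (⟨2, h⟩ : Fin 4) = 2 := rfl
lemma fmk3 (h : 3 < 4) : (⟨3, h⟩ : Fin 4) = 3 := rfl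

set_option maxHeartbeats 2000000 in
lemma jminors (u v w : Fin 4 → ℝ)
    (e0 : w 0 = -u 1) (e1 : w 1 = u 0) (e2 : w 2 = -u 3) (e3 : w 3 = u 2)
    (h2 : u 0 * v 2 - u 1 * v 3 - u 2 * v 0 + u 3 * v 1 = 0)
    (h3 : u 0 * v 3 + u 1 * v 2 - u 2 * v 1 - u 3 * v 0 = 0) :
    ∀ i j k, mnr w u v i j k = 0 := by
  intro i j k
  fin_cases i <;> fin_cases j <;> fin_cases k <;>
    simp only [mnr, fmk0, fmk1, fmk2, fmk3, e0, e1, e2, e3] <;>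
    first
      | ring1
      | linear_combination (-(u 0)) * h2 + (-(u 1)) * h3
      | linear_combination (u 0) * h2 + (u 1) * h3
      | linear_combination (u 1) * h2 + (-(u 0)) * h3
      | linear_combination (-(u 1)) * h2 + (u 0) * h3
      | linear_combination (u 2) * h2 + (u 3) * h3
      | linear_combination (-(u 2)) * h2 + (-(u 3)) * h3
      | linear_combination (-(u 3)) * h2 + (u 2) * h3
      | linear_combination (u 3) * h2 + (-(u 2)) * h3

lemma omega1_eq (x y : Fin 4 → ℝ) :
    ωval SD1 x y = x 0 * y 1 - x 1 * y 0 - x 2 * y 3 + x 3 * y 2 := by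
  simp [ωval, SD1, Fin.sum_univ_four, Matrix.cons_val', Matrix.cons_val_zero,
    Matrix.cons_val_one, Matrix.head_cons, Matrix.empty_val',
    Matrix.cons_val_fin_one, Matrix.head_fin_const, Matrix.vecHead,
    Matrix.vecTail, Function.comp]
  ring

lemma omega2_eq (x y : Fin 4 → ℝ) :
    ωval SD2 x y = x 0 * y 2 - x 1 * y 3 - x 2 * y 0 + x 3 * y 1 := by
  simp [ωval, SD2, Fin.sum_univ_four, Matrix.cons_val', Matrix.cons_val_zero,
    Matrix.cons_val_one, Matrix.head_cons, Matrix.empty_val',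
    Matrix.cons_val_fin_one, Matrix.head_fin_const, Matrix.vecHead,
    Matrix.vecTail, Function.comp]
  ring

lemma omega3_eq (x y : Fin 4 → ℝ) :
    ωval SD3 x y = x 0 * y 3 + x 1 * y 2 - x 2 * y 1 - x 3 * y 0 := by
  simp [ωval, SD3, Fin.sum_univ_four, Matrix.cons_val', Matrix.cons_val_zero,
    Matrix.cons_val_one, Matrix.head_cons, Matrix.empty_val',
    Matrix.cons_val_fin_one, Matrix.head_fin_const, Matrix.vecHead,
    Matrix.vecTail, Function.comp]
  ring

lemma GJ_eq (x y : Fin 4 → ℝ) :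
    G x (Jmap y) = -(x 0 * y 1 - x 1 * y 0 - x 2 * y 3 + x 3 * y 2) := by
  simp [G, Jmap]
  ring

lemma jmap_jmap (x : Fin 4 → ℝ) : Jmap (Jmap x) = -x := by
  funext k
  fin_cases k <;> simp [Jmap]

lemma jmap_lin (s t : ℝ) (x y : Fin 4 → ℝ) :
    Jmap (s • x + t • y) = s • Jmap x + t • Jmap y := by
  funext k
  fin_cases k <;> simp [Jmap] <;> ring

lemma jmap_zero : Jmap 0 = 0 := by
  funext k
  fin_cases k <;> simp [Jmap]

set_option maxHeartbeats 1000000 in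
theorem stmt8 (P : Submodule ℝ (Fin 4 → ℝ)) (hP : Module.finrank ℝ P = 2) :
    (∀ M : Matrix (Fin 4) (Fin 4) ℝ, Mᵀ = -M → hodgeStar M = M →
        ∀ v ∈ P, ∀ w ∈ P, ωval M v w = 0) ↔
      ((∀ v ∈ P, Jmap v ∈ P) ∧ (∀ v ∈ P, ∀ w ∈ P, G v (Jmap w) = 0)) := by
  constructor
  · intro H
    obtain ⟨b⟩ : Nonempty (Module.Basis (Fin 2) ℝ P) := ⟨Module.finBasisOfFinrankEq ℝ P hP⟩
    set u : Fin 4 → ℝ := ↑(b 0) with hu_def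
    set v : Fin 4 → ℝ := ↑(b 1) with hv_def
    have hu : u ∈ P := (b 0).2
    have hv : v ∈ P := (b 1).2
    have hrep : ∀ x ∈ P, ∃ s t : ℝ, x = s • u + t • v := by
      intro x hx
      refine ⟨b.repr ⟨x, hx⟩ 0, b.repr ⟨x, hx⟩ 1, ?_⟩
      have hs := b.sum_repr ⟨x, hx⟩
      rw [Fin.sum_univ_two] at hs
      have := congrArg (Subtype.val) hs
      simpa using this.symm
    have hind : ∀ s t : ℝ, s • u + t • v = 0 → s = 0 ∧ t = 0 := by
      intro s t hst
      have li := b.linearIndependent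
      rw [Fintype.linearIndependent_iff] at li
      have hzero : s • (b 0) + t • (b 1) = (0 : P) := by
        apply Subtype.ext
        simpa using hst
      have := li ![s, t] (by rw [Fin.sum_univ_two]; simpa using hzero)
      exact ⟨this 0, this 1⟩
    have h2 : u 0 * v 2 - u 1 * v 3 - u 2 * v 0 + u 3 * v 1 = 0 := by
      have hh := H SD2 SD2_skew SD2_sd u hu v hv
      rwa [omega2_eq] at hh
    have h3 : u 0 * v 3 + u 1 * v 2 - u 2 * v 1 - u 3 * v 0 = 0 := by
      have hh := H SD3 SD3_skew SD3_sd u hu v hv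
      rwa [omega3_eq] at hh
    obtain ⟨i, j, hij⟩ := exists_minor u v hind
    have hJu : Jmap u ∈ P := by
      obtain ⟨a, c, hac⟩ := span_of_minors u v (Jmap u) i j hij
        (fun k => jminors u v (Jmap u) rfl rfl rfl rfl h2 h3 i j k)
      rw [hac]; exact P.add_mem (P.smul_mem _ hu) (P.smul_mem _ hv)
    have hJv : Jmap v ∈ P := by
      have h2' : v 0 * u 2 - v 1 * u 3 - v 2 * u 0 + v 3 * u 1 = 0 := by linear_combination -h2
      have h3' : v 0 * u 3 + v 1 * u 2 - v 2 * u 1 - v 3 * u 0 = 0 := by linear_combination -h3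
      have hm : ∀ k, mnr (Jmap v) u v i j k = 0 := by
        intro k
        rw [mnr_swap, jminors v u (Jmap v) rfl rfl rfl rfl h2' h3' i j k, neg_zero]
      obtain ⟨a, c, hac⟩ := span_of_minors u v (Jmap v) i j hij hm
      rw [hac]; exact P.add_mem (P.smul_mem _ hu) (P.smul_mem _ hv)
    constructor
    · intro x hx
      obtain ⟨s, t, hxst⟩ := hrep x hx
      have hjx : Jmap x = s • Jmap u + t • Jmap v := by rw [hxst, jmap_lin]
      rw [hjx]
      exact P.add_mem (P.smul_mem _ hJu) (P.smul_mem _ hJv)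
    · intro x hx y hy
      have hh := H SD1 SD1_skew SD1_sd x hx y hy
      rw [omega1_eq] at hh
      rw [GJ_eq, hh, neg_zero]
  · rintro ⟨hJ, hL⟩ M hT hS x hx y hy
    have hnt : Nontrivial P :=
      Module.nontrivial_of_finrank_pos (R := ℝ) (by rw [hP]; norm_num)
    obtain ⟨z, hz⟩ := exists_ne (0 : P)
    set u : Fin 4 → ℝ := ↑z with hu_def
    have hu : u ∈ P := z.2
    have hune : u ≠ 0 := fun h0 => hz (Subtype.ext h0)
    have hJu : Jmap u ∈ P := hJ u hu
    have hnull : u 0 * u 0 + u 1 * u 1 - u 2 * u 2 - u 3 * u 3 = 0 := by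
      have hh := hL u hu (Jmap u) hJu
      rw [jmap_jmap] at hh
      simp only [G, Pi.neg_apply] at hh
      linear_combination -hh
    have hind2 : ∀ s t : ℝ, s • u + t • Jmap u = 0 → s = 0 ∧ t = 0 := by
      intro s t h
      have h' : s • Jmap u + t • (-u) = 0 := by
        have hJ2 := congrArg Jmap h
        rw [jmap_lin, jmap_jmap, jmap_zero] at hJ2
        exact hJ2
      have key : (s ^ 2 + t ^ 2) • u =
          s • (s • u + t • Jmap u) - t • (s • Jmap u + t • (-u)) := by
        module
      rw [h, h'] at key
      simp only [smul_zero, sub_zero] at key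
      rcases smul_eq_zero.mp key with hst | h0
      · constructor <;> nlinarith [sq_nonneg s, sq_nonneg t]
      · exact absurd h0 hune
    have hpair : LinearIndependent ℝ ![u, Jmap u] := LinearIndependent.pair_iff.mpr hind2
    have hJuP : (⟨Jmap u, hJu⟩ : P) = ⟨Jmap u, hJu⟩ := rfl
    have li : LinearIndependent ℝ (![⟨u, hu⟩, ⟨Jmap u, hJu⟩] : Fin 2 → P) := by
      apply LinearIndependent.of_comp P.subtype
      have hfc : (P.subtype) ∘ (![⟨u, hu⟩, ⟨Jmap u, hJu⟩] : Fin 2 → P) = ![u, Jmap u] := by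
        funext i; fin_cases i <;> rfl
      rw [hfc]; exact hpair
    have hcard : Fintype.card (Fin 2) = Module.finrank ℝ P := by simp [hP]
    have hrep : ∀ z' : P, ∃ a d : ℝ, (z' : Fin 4 → ℝ) = a • u + d • Jmap u := by
      intro z'
      set c := basisOfLinearIndependentOfCardEqFinrank li hcard with hc_def
      have hcoe : ⇑c = (![⟨u, hu⟩, ⟨Jmap u, hJu⟩] : Fin 2 → P) :=
        coe_basisOfLinearIndependentOfCardEqFinrank li hcard
      refine ⟨c.repr z' 0, c.repr z' 1, ?_⟩
      have hs := c.sum_repr z'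
      rw [Fin.sum_univ_two, hcoe] at hs
      have := congrArg Subtype.val hs
      simpa using this.symm
    obtain ⟨a, b1, hxe0⟩ := hrep ⟨x, hx⟩
    obtain ⟨c1, d1, hye0⟩ := hrep ⟨y, hy⟩
    have hxe : x = a • u + b1 • Jmap u := hxe0
    have hye : y = c1 • u + d1 • Jmap u := hye0
    have ha : ∀ i j : Fin 4, M j i = -M i j := by
      intro i j
      have := congrFun (congrFun hT i) j
      simpa using this
    have hdiag : ∀ i, M i i = 0 := fun i => by have := ha i i; linarith
    have hs01 := congrFun (congrFun hS 0) 1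
    have hs02 := congrFun (congrFun hS 0) 2
    have hs03 := congrFun (congrFun hS 0) 3
    norm_num [hodgeStar, eps, gInv, Fin.sum_univ_four,
      show ((2:Fin 4):ℕ)=2 from rfl, show ((3:Fin 4):ℕ)=3 from rfl,
      Matrix.cons_val', Matrix.cons_val_zero, Matrix.cons_val_one, Matrix.head_cons,
      Matrix.empty_val', Matrix.cons_val_fin_one, Matrix.head_fin_const,
      Matrix.vecHead, Matrix.vecTail, Function.comp, Matrix.cons_val_two, Matrix.cons_val_three] at hs01 hs02 hs03
    have h23 : M 2 3 = -M 0 1 := by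
      have := ha 2 3
      linarith
    have h13 : M 1 3 = -M 0 2 := by
      have := ha 1 3
      linarith [hs02, ha 3 1]
    have h12 : M 1 2 = M 0 3 := by
      linarith [hs03, ha 1 2, ha 2 1]
    show ωval M x y = 0
    rw [hxe, hye]
    simp only [ωval, Fin.sum_univ_four, Pi.add_apply, Pi.smul_apply, smul_eq_mul,
      Jmap, Matrix.cons_val_zero, Matrix.cons_val_one, Matrix.cons_val_two,
      Matrix.cons_val_three, Matrix.cons_val_succ, Matrix.head_cons,
      Matrix.vecHead, Matrix.vecTail, Matrix.tail_cons, Function.comp_apply]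
    rw [hdiag 0, hdiag 1, hdiag 2, hdiag 3, ha 0 1, ha 0 2, ha 0 3, ha 1 2,
      ha 1 3, ha 2 3, h23, h13, h12]
    linear_combination ((a * d1 - b1 * c1) * M 0 1) * hnull
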